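/- Let N > 1, κ ∈ {−1, 0, 1}, K = κ(N−1), λ ∈ (0,1], and L > 0, with L < π in the case κ = 1. Then for every ε > 0 there exists δ₀ > 0, depending only on N, λ, L, ε, such that for every D ∈ [λL, L] and every a ∈ (0, δ₀) one has |v_{K,N,D}(a)·k_D / a^N − 1| ≤ ε; i.e. v_{K,N,D}(a) = (a^N/k_D)(1 + o(1)) as a → 0⁺, uniformly in D ∈ [λL, L]. -/

import Mathlib

open MeasureTheory Filter Set


/-- The function `s_κ`. -/
noncomputable def sK (κ θ : ℝ) : ℝ :=
  if 0 < κ then Real.sin (Real.sqrt κ * θ) / Real.sqrt κ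
  else if κ = 0 then θ
  else Real.sinh (Real.sqrt (-κ) * θ) / Real.sqrt (-κ)

/-- `k_D = ∫₀^D s_κ(t)^(N-1) dt`. -/
noncomputable def kD (κ N D : ℝ) : ℝ := ∫ t in (0:ℝ)..D, sK κ t ^ (N - 1)

/-- The function `f_{K,N,D}` (with `K = κ(N-1)`). -/
noncomputable def fKND (κ N D x : ℝ) : ℝ :=
  ((∫ y in (0:ℝ)..x, (sK κ (D - y) / sK κ (D - x)) ^ (N - 1)) +
    ∫ y in x..D, (sK κ y / sK κ x) ^ (N - 1))⁻¹

/-- The model density `h^a_{K,N,D}` (with `K = κ(N-1)`). -/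
noncomputable def hKND (κ N D a x : ℝ) : ℝ :=
  if x ≤ a then fKND κ N D a * (sK κ (D - x) / sK κ (D - a)) ^ (N - 1)
  else fKND κ N D a * (sK κ x / sK κ a) ^ (N - 1)

/-- The volume map `v_{K,N,D}(a) = ∫₀^a h^a_{K,N,D}`. -/
noncomputable def vKND (κ N D a : ℝ) : ℝ := ∫ x in (0:ℝ)..a, hKND κ N D a x

/-- `ω_N = π^(N/2)/Γ(N/2+1)`. -/
noncomputable def omegaN (N : ℝ) : ℝ := Real.pi ^ (N / 2) / Real.Gamma (N / 2 + 1)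

/-- `Vol_{K,N}(r) = N ω_N ∫₀^r s_κ(t)^(N-1) dt` (with `K = κ(N-1)`). -/
noncomputable def VolKN (κ N r : ℝ) : ℝ := N * omegaN N * ∫ t in (0:ℝ)..r, sK κ t ^ (N - 1)

/-- The coefficient `σ^{(s)}_{K,N-1}(θ)`, valued in `[0,∞]`. -/
noncomputable def sigmaE (K N s θ : ℝ) : ENNReal :=
  if (N - 1) * Real.pi ^ 2 ≤ K * θ ^ 2 then ⊤
  else ENNReal.ofReal (sK (K / (N - 1)) (s * θ) / sK (K / (N - 1)) θ)

/-- A nonnegative continuous function `h` on the interval `I` is an `MCP(K,N)` density. -/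
def IsMCPDensity (K N : ℝ) (I : Set ℝ) (h : ℝ → ℝ) : Prop :=
  ContinuousOn h I ∧ (∀ x ∈ I, 0 ≤ h x) ∧
    ∀ x₀ ∈ I, ∀ x₁ ∈ I, ∀ t ∈ Set.Icc (0:ℝ) 1,
      sigmaE K N (1 - t) |x₁ - x₀| ^ (N - 1) * ENNReal.ofReal (h x₀) ≤
        ENNReal.ofReal (h (t * x₁ + (1 - t) * x₀))

/-- The measure `h·𝓛¹` restricted to `[0,D]`. -/
noncomputable def mcMeasure (D : ℝ) (h : ℝ → ℝ) : Measure ℝ :=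
  (volume.restrict (Set.Icc 0 D)).withDensity fun x => ENNReal.ofReal (h x)

/-- The outer Minkowski content `μ⁺(E) = liminf_{ρ→0⁺} (μ(E^ρ) - μ(E))/ρ`. -/
noncomputable def minkContent (μ : Measure ℝ) (E : Set ℝ) : ℝ :=
  Filter.liminf (fun ρ : ℝ => ((μ (Metric.thickening ρ E)).toReal - (μ E).toReal) / ρ)
    (nhdsWithin 0 (Set.Ioi 0))


section Aux


lemma sK_one : sK 1 = Real.sin := by
  funext θ; simp [sK, Real.sqrt_one]

lemma sK_zero : sK 0 = id := by
  funext θ; simp [sK]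

lemma sK_neg_one : sK (-1) = Real.sinh := by
  funext θ; norm_num [sK, Real.sqrt_one]

variable {κ L : ℝ}

lemma continuous_sK (hκ : κ = -1 ∨ κ = 0 ∨ κ = 1) : Continuous (sK κ) := by
  rcases hκ with h|h|h <;> subst h
  · rw [sK_neg_one]; exact Real.continuous_sinh
  · rw [sK_zero]; exact continuous_id
  · rw [sK_one]; exact Real.continuous_sin

lemma sK_pos (hκ : κ = -1 ∨ κ = 0 ∨ κ = 1) (hLpi : κ = 1 → L < Real.pi)
    {t : ℝ} (ht : 0 < t) (htL : t ≤ L) : 0 < sK κ t := by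
  rcases hκ with h|h|h <;> subst h
  · rw [sK_neg_one]; exact Real.sinh_pos_iff.2 ht
  · rw [sK_zero]; exact ht
  · rw [sK_one]; exact Real.sin_pos_of_pos_of_lt_pi ht (lt_of_le_of_lt htL (hLpi rfl))

lemma sK_zero_eq (hκ : κ = -1 ∨ κ = 0 ∨ κ = 1) : sK κ 0 = 0 := by
  rcases hκ with h|h|h <;> subst h <;> simp [sK_neg_one, sK_zero, sK_one]

lemma sK_nonneg (hκ : κ = -1 ∨ κ = 0 ∨ κ = 1) (hLpi : κ = 1 → L < Real.pi)
    {t : ℝ} (ht : 0 ≤ t) (htL : t ≤ L) : 0 ≤ sK κ t := by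
  rcases eq_or_lt_of_le ht with h|h
  · rw [← h, sK_zero_eq hκ]
  · exact (sK_pos hκ hLpi h htL).le

lemma sK_lip (hκ : κ = -1 ∨ κ = 0 ∨ κ = 1) (hL : 0 ≤ L)
    {u v : ℝ} (hu : u ∈ Icc 0 L) (hv : v ∈ Icc 0 L) :
    |sK κ u - sK κ v| ≤ Real.cosh L * |u - v| := by
  rcases hκ with h|h|h <;> subst h
  · rw [sK_neg_one]
    have := (convex_Icc (0:ℝ) L).norm_image_sub_le_of_norm_deriv_le
      (f := Real.sinh)
      (fun x _ => Real.differentiable_sinh x)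
      (fun x hx => by
        rw [Real.deriv_sinh]
        rw [Real.norm_eq_abs, abs_of_nonneg (Real.cosh_pos x).le]
        exact Real.cosh_le_cosh.2 (by
          rw [abs_of_nonneg hx.1, abs_of_nonneg hL]; exact hx.2))
      hv hu
    simpa [Real.norm_eq_abs] using this
  · rw [sK_zero]
    have h1 : (1:ℝ) ≤ Real.cosh L := Real.one_le_cosh L
    have : (0:ℝ) ≤ |u - v| := abs_nonneg _
    calc |id u - id v| = 1 * |u - v| := by simp
      _ ≤ Real.cosh L * |u - v| := by nlinarith
  · rw [sK_one]
    have h1 : |Real.sin u - Real.sin v| ≤ 1 * |u - v| := by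
      have := (convex_Icc (0:ℝ) L).norm_image_sub_le_of_norm_deriv_le
        (f := Real.sin) (C := 1)
        (fun x _ => Real.differentiable_sin x)
        (fun x _ => by rw [Real.deriv_sin, Real.norm_eq_abs]; exact Real.abs_cos_le_one x)
        hv hu
      simpa [Real.norm_eq_abs] using this
    have h2 : (1:ℝ) ≤ Real.cosh L := Real.one_le_cosh L
    nlinarith [abs_nonneg (u - v)]

lemma sK_near (hκ : κ = -1 ∨ κ = 0 ∨ κ = 1) {δ a : ℝ} (hδ : δ ≤ 1)
    (ha : 0 < a) (haδ : a ≤ δ) :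
    |sK κ a - a| ≤ a * (δ ^ 2 / 4 + (Real.cosh δ - 1)) := by
  have hδ0 : 0 < δ := lt_of_lt_of_le ha haδ
  have hc1 : (1:ℝ) ≤ Real.cosh δ := Real.one_le_cosh δ
  rcases hκ with h|h|h <;> subst h
  · rw [sK_neg_one]
    -- sinh a - a ≤ a * (cosh a - 1) via MVT on (sinh - id)
    have key : |Real.sinh a - a - (Real.sinh 0 - 0)| ≤ (Real.cosh a - 1) * |a - 0| := by
      have := (convex_Icc (0:ℝ) a).norm_image_sub_le_of_norm_deriv_le
        (f := fun t => Real.sinh t - t) (C := Real.cosh a - 1)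
        (fun x _ => (Real.differentiable_sinh x).sub (differentiable_id x))
        (fun x hx => by
          have hd : deriv (fun t => Real.sinh t - t) x = Real.cosh x - 1 := by
            have := ((Real.hasDerivAt_sinh x).sub (hasDerivAt_id x)).deriv
            simpa using this
          rw [hd, Real.norm_eq_abs, abs_of_nonneg (by linarith [Real.one_le_cosh x])]
          have : Real.cosh x ≤ Real.cosh a := Real.cosh_le_cosh.2
            (by rw [abs_of_nonneg hx.1, abs_of_nonneg ha.le]; exact hx.2)
          linarith)
        (left_mem_Icc.2 ha.le) (right_mem_Icc.2 ha.le)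
      simpa [Real.norm_eq_abs] using this
    simp only [Real.sinh_zero, sub_zero] at key
    rw [abs_of_nonneg ha.le] at key
    have hca : Real.cosh a ≤ Real.cosh δ := Real.cosh_le_cosh.2
      (by rw [abs_of_nonneg ha.le, abs_of_nonneg hδ0.le]; exact haδ)
    calc |Real.sinh a - a| ≤ (Real.cosh a - 1) * a := key
      _ ≤ a * (δ ^ 2 / 4 + (Real.cosh δ - 1)) := by nlinarith [sq_nonneg δ]
  · rw [sK_zero]; simp only [id_eq, sub_self, abs_zero]
    have : (0:ℝ) ≤ δ ^ 2 / 4 := by positivity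
    nlinarith
  · rw [sK_one]
    have h1 : Real.sin a ≤ a := Real.sin_le ha.le
    have h2 : a - a ^ 3 / 4 < Real.sin a := by
      have := Real.sin_gt_sub_cube ha; nlinarith [pow_pos ha 3]
    rw [abs_of_nonpos (by linarith)]
    have haa : a * a ≤ δ * δ := mul_le_mul haδ haδ ha.le hδ0.le
    have : a ^ 3 / 4 ≤ a * (δ ^ 2 / 4) := by nlinarith [mul_le_mul_of_nonneg_left haa ha.le]
    nlinarith

end Aux


noncomputable def etaF (δ : ℝ) : ℝ := δ ^ 2 / 4 + (Real.cosh δ - 1)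
noncomputable def uFd (C m δ : ℝ) : ℝ := C * δ / m
noncomputable def hiFd (N C m δ : ℝ) : ℝ := (1 + uFd C m δ) ^ (N - 1)
noncomputable def loFd (N C m δ : ℝ) : ℝ := (1 - uFd C m δ) ^ (N - 1)
noncomputable def qFd (N M p δ : ℝ) : ℝ := δ * M ^ (N - 1) / p
noncomputable def UFd (N C m M p δ : ℝ) : ℝ :=
  hiFd N C m δ * (1 + etaF δ) ^ (N - 1) / (1 - qFd N M p δ)
noncomputable def WFd (N C m p δ : ℝ) : ℝ :=
  loFd N C m δ * p / (δ ^ N * hiFd N C m δ + p / (1 - etaF δ) ^ (N - 1))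

set_option maxHeartbeats 2000000 in
/-- `v_{K,N,D}(a) = (a^N/k_D)(1+o(1))` as `a → 0⁺`, uniformly in `D ∈ [λL, L]`. -/
theorem stmt1 (N κ lam L : ℝ) (hN : 1 < N) (hκ : κ = -1 ∨ κ = 0 ∨ κ = 1)
    (hlam : lam ∈ Set.Ioc (0:ℝ) 1) (hL : 0 < L) (hLpi : κ = 1 → L < Real.pi) :
    ∀ ε > 0, ∃ δ₀ > 0, ∀ D ∈ Set.Icc (lam * L) L, ∀ a ∈ Set.Ioo (0:ℝ) δ₀,
      |vKND κ N D a * kD κ N D / a ^ N - 1| ≤ ε := by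
  intro ε hε
  obtain ⟨hlam0, hlam1⟩ := hlam
  have he : (0:ℝ) < N - 1 := by linarith
  have hll : 0 < lam * L / 2 := by positivity
  have hllL : lam * L / 2 ≤ L := by nlinarith
  -- minimum of sK on [lam*L/2, L]
  obtain ⟨t₀, ht₀, hmin⟩ := isCompact_Icc.exists_isMinOn
    (nonempty_Icc.2 hllL) ((continuous_sK hκ).continuousOn (s := Icc (lam*L/2) L))
  obtain ⟨m, hm, hmle⟩ : ∃ m : ℝ, 0 < m ∧ ∀ t ∈ Icc (lam*L/2) L, m ≤ sK κ t :=
    ⟨sK κ t₀, sK_pos hκ hLpi (lt_of_lt_of_le hll ht₀.1) ht₀.2, fun t ht => hmin ht⟩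
  obtain ⟨C, hC1, hlip⟩ : ∃ C : ℝ, 1 ≤ C ∧ ∀ u ∈ Icc (0:ℝ) L, ∀ v ∈ Icc (0:ℝ) L,
      |sK κ u - sK κ v| ≤ C * |u - v| :=
    ⟨Real.cosh L, Real.one_le_cosh L, fun u hu v hv => sK_lip hκ hL.le hu hv⟩
  have hC0 : (0:ℝ) < C := by linarith
  obtain ⟨M, hM0, hsub⟩ : ∃ M : ℝ, 0 < M ∧ ∀ t ∈ Icc (0:ℝ) L, sK κ t ≤ M := by
    refine ⟨C * L, mul_pos hC0 hL, ?_⟩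
    intro t ht
    have h3 := hlip t ht 0 (left_mem_Icc.2 hL.le)
    rw [sK_zero_eq hκ, sub_zero, sub_zero, abs_of_nonneg ht.1] at h3
    have h1 : sK κ t ≤ |sK κ t| := le_abs_self _
    have h2 : C * t ≤ C * L := mul_le_mul_of_nonneg_left ht.2 hC0.le
    calc sK κ t ≤ |sK κ t| := h1
      _ ≤ C * t := h3
      _ ≤ C * L := h2
  have hsnn : ∀ t ∈ Icc (0:ℝ) L, 0 ≤ sK κ t := fun t ht => sK_nonneg hκ hLpi ht.1 ht.2
  obtain ⟨p₀, hp₀, hp₀_def⟩ : ∃ p : ℝ, 0 < p ∧ p = (lam * L / 2) * m ^ (N-1) :=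
    ⟨_, mul_pos hll (Real.rpow_pos_of_pos hm _), rfl⟩
  -- tendsto facts
  have Tu : Tendsto (fun δ => uFd C m δ) (nhds 0) (nhds 0) := by
    have hcont : Continuous (fun δ => uFd C m δ) := by unfold uFd; fun_prop
    have h0 : uFd C m 0 = 0 := by simp [uFd]
    simpa [h0] using hcont.tendsto 0
  have Tη : Tendsto (fun δ => etaF δ) (nhds 0) (nhds 0) := by
    have hcont : Continuous (fun δ => etaF δ) := by unfold etaF; fun_prop
    have h0 : etaF 0 = 0 := by simp [etaF]
    simpa [h0] using hcont.tendsto 0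
  have Trpow1 : ∀ f : ℝ → ℝ, Tendsto f (nhds 0) (nhds 1) →
      Tendsto (fun δ => f δ ^ (N-1)) (nhds 0) (nhds 1) := by
    intro f hf
    have hc : ContinuousAt (fun x : ℝ => x ^ (N-1)) 1 :=
      Real.continuousAt_rpow_const 1 (N-1) (Or.inl one_ne_zero)
    have := hc.tendsto.comp hf
    simpa [Real.one_rpow, Function.comp_def] using this
  have Thi : Tendsto (fun δ => hiFd N C m δ) (nhds 0) (nhds 1) := by
    unfold hiFd
    apply Trpow1
    simpa using (tendsto_const_nhds (x := (1:ℝ))).add Tu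
  have Tlo : Tendsto (fun δ => loFd N C m δ) (nhds 0) (nhds 1) := by
    unfold loFd
    apply Trpow1
    simpa using (tendsto_const_nhds (x := (1:ℝ))).sub Tu
  have Tq : Tendsto (fun δ => qFd N M p₀ δ) (nhds 0) (nhds 0) := by
    have hcont : Continuous (fun δ => qFd N M p₀ δ) := by unfold qFd; fun_prop
    have h0 : qFd N M p₀ 0 = 0 := by simp [qFd]
    simpa [h0] using hcont.tendsto 0
  have TU : Tendsto (fun δ => UFd N C m M p₀ δ) (nhds 0) (nhds 1) := by
    unfold UFd
    have hnum : Tendsto (fun δ => hiFd N C m δ * (1 + etaF δ) ^ (N-1)) (nhds 0) (nhds 1) := by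
      have h2 : Tendsto (fun δ => (1 + etaF δ) ^ (N-1)) (nhds 0) (nhds 1) := by
        apply Trpow1
        simpa using (tendsto_const_nhds (x := (1:ℝ))).add Tη
      simpa using Thi.mul h2
    have hden : Tendsto (fun δ => 1 - qFd N M p₀ δ) (nhds 0) (nhds 1) := by
      simpa using (tendsto_const_nhds (x := (1:ℝ))).sub Tq
    simpa [Pi.div_def] using hnum.div hden one_ne_zero
  have TW : Tendsto (fun δ => WFd N C m p₀ δ) (nhds 0) (nhds 1) := by
    unfold WFd
    have hnum : Tendsto (fun δ => loFd N C m δ * p₀) (nhds 0) (nhds p₀) := by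
      simpa using Tlo.mul (tendsto_const_nhds (x := p₀))
    have hpow : Tendsto (fun δ : ℝ => δ ^ N) (nhds 0) (nhds 0) := by
      have hc : ContinuousAt (fun x : ℝ => x ^ N) 0 :=
        Real.continuousAt_rpow_const 0 N (Or.inr (by linarith))
      have h0 : (0:ℝ) ^ N = 0 := Real.zero_rpow (by linarith)
      simpa [h0] using hc.tendsto
    have hden : Tendsto (fun δ => δ ^ N * hiFd N C m δ + p₀ / (1 - etaF δ) ^ (N-1))
        (nhds 0) (nhds p₀) := by
      have h1 : Tendsto (fun δ => δ ^ N * hiFd N C m δ) (nhds 0) (nhds 0) := by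
        simpa using hpow.mul Thi
      have h2 : Tendsto (fun δ => p₀ / (1 - etaF δ) ^ (N-1)) (nhds 0) (nhds p₀) := by
        have h3 : Tendsto (fun δ => (1 - etaF δ) ^ (N-1)) (nhds 0) (nhds 1) := by
          apply Trpow1
          simpa using (tendsto_const_nhds (x := (1:ℝ))).sub Tη
        simpa [Pi.div_def] using (tendsto_const_nhds (x := p₀)).div h3 one_ne_zero
      simpa using h1.add h2
    have := hnum.div hden hp₀.ne'
    simpa [div_self hp₀.ne', Pi.div_def] using this
  -- choose δ₀
  have hev : ∀ᶠ δ in nhdsWithin (0:ℝ) (Set.Ioi 0),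
      δ ∈ Set.Ioi (0:ℝ) ∧ δ ≤ 1 ∧ δ ≤ lam * L / 2 ∧ uFd C m δ ≤ 1/2 ∧ etaF δ ≤ 1/2 ∧
        qFd N M p₀ δ ≤ 1/2 ∧ UFd N C m M p₀ δ ≤ 1 + ε ∧ 1 - ε ≤ WFd N C m p₀ δ := by
    have hmem : ∀ᶠ δ in nhdsWithin (0:ℝ) (Set.Ioi 0), δ ∈ Set.Ioi (0:ℝ) :=
      eventually_mem_nhdsWithin
    have hid : Tendsto (fun δ : ℝ => δ) (nhdsWithin (0:ℝ) (Set.Ioi 0)) (nhds 0) :=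
      tendsto_id.mono_left nhdsWithin_le_nhds
    have E1 := hid.eventually_le_const (by norm_num : (0:ℝ) < 1)
    have E2 := hid.eventually_le_const hll
    have mono : ∀ f : ℝ → ℝ, ∀ c : ℝ, Tendsto f (nhds 0) (nhds c) →
        Tendsto f (nhdsWithin (0:ℝ) (Set.Ioi 0)) (nhds c) :=
      fun f c hf => hf.mono_left nhdsWithin_le_nhds
    have E3 := (mono _ _ Tu).eventually_le_const (by norm_num : (0:ℝ) < 1/2)
    have E4 := (mono _ _ Tη).eventually_le_const (by norm_num : (0:ℝ) < 1/2)
    have E5 := (mono _ _ Tq).eventually_le_const (by norm_num : (0:ℝ) < 1/2)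
    have E6 := (mono _ _ TU).eventually_le_const (by linarith : (1:ℝ) < 1 + ε)
    have E7 := (mono _ _ TW).eventually_const_le (by linarith : 1 - ε < (1:ℝ))
    filter_upwards [hmem, E1, E2, E3, E4, E5, E6, E7] with δ h0 h1 h2 h3 h4 h5 h6 h7
    exact ⟨h0, h1, h2, h3, h4, h5, h6, h7⟩
  obtain ⟨δ₀, hδ₀mem, hδ₀1, hδ₀ll, hu2, hη2, hq2, hUε, hWε⟩ := hev.exists
  have hδ₀ : 0 < δ₀ := hδ₀mem
  refine ⟨δ₀, hδ₀, ?_⟩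
  intro D hD a ha
  obtain ⟨hDl, hDu⟩ := hD
  obtain ⟨ha0, haδ⟩ := ha
  have hlamL : 0 < lam * L := by positivity
  have haδ' : a ≤ δ₀ := haδ.le
  have haL : a ≤ L := le_trans (haδ'.trans hδ₀ll) hllL
  have haD : a < D := lt_of_lt_of_le (lt_of_lt_of_le haδ (hδ₀ll.trans (by linarith))) hDl
  have hD0 : 0 < D := lt_trans ha0 haD
  -- constants at δ₀
  have hu0 : 0 ≤ uFd C m δ₀ := by
    have : (0:ℝ) ≤ C * δ₀ / m := by positivity
    simpa [uFd] using this
  have hη0 : 0 ≤ etaF δ₀ := by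
    have h1 : (1:ℝ) ≤ Real.cosh δ₀ := Real.one_le_cosh δ₀
    have : (0:ℝ) ≤ δ₀^2/4 := by positivity
    simp only [etaF]; linarith
  have hq0 : 0 ≤ qFd N M p₀ δ₀ := by
    have : (0:ℝ) ≤ δ₀ * M ^ (N-1) / p₀ := by positivity
    simpa [qFd] using this
  have h1u : (0:ℝ) < 1 - uFd C m δ₀ := by linarith only [hu2]
  have h1η : (0:ℝ) < 1 - etaF δ₀ := by linarith only [hη2]
  have h1q : (0:ℝ) < 1 - qFd N M p₀ δ₀ := by linarith only [hq2]
  have hlo0 : 0 < loFd N C m δ₀ := by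
    simp only [loFd]; exact Real.rpow_pos_of_pos h1u _
  have hhi0 : 0 < hiFd N C m δ₀ := by
    simp only [hiFd]; exact Real.rpow_pos_of_pos (by linarith) _
  have hlo1 : loFd N C m δ₀ ≤ 1 := by
    simp only [loFd]
    exact Real.rpow_le_one h1u.le (by linarith) he.le
  have hhi1 : 1 ≤ hiFd N C m δ₀ := by
    simp only [hiFd]
    calc (1:ℝ) = 1 ^ (N-1) := (Real.one_rpow _).symm
      _ ≤ (1 + uFd C m δ₀) ^ (N-1) := Real.rpow_le_rpow zero_le_one (by linarith) he.le
  -- abbreviations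
  set c := sK κ (D - a) with hc_def
  set sa := sK κ a with hsa_def
  have hDy : ∀ y ∈ Icc (0:ℝ) a, D - y ∈ Icc (lam * L / 2) L := by
    intro y hy
    constructor
    · have : y ≤ lam * L / 2 := le_trans hy.2 (haδ'.trans hδ₀ll)
      linarith [hDl]
    · linarith [hy.1, hDu]
  have hcm : m ≤ c := by
    rw [hc_def]
    exact hmle _ (hDy a (right_mem_Icc.2 ha0.le))
  have hc0 : 0 < c := lt_of_lt_of_le hm hcm
  -- ratio bounds
  have hratio : ∀ y ∈ Icc (0:ℝ) a, 1 - uFd C m δ₀ ≤ sK κ (D - y) / c ∧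
      sK κ (D - y) / c ≤ 1 + uFd C m δ₀ := by
    intro y hy
    have hmem1 : D - y ∈ Icc (0:ℝ) L := by
      have := hDy y hy; exact ⟨le_trans hll.le this.1, this.2⟩
    have hmem2 : D - a ∈ Icc (0:ℝ) L := by
      have := hDy a (right_mem_Icc.2 ha0.le); exact ⟨le_trans hll.le this.1, this.2⟩
    have hlipuv := hlip _ hmem1 _ hmem2
    have habs : |(D - y) - (D - a)| = a - y := by
      rw [show (D - y) - (D - a) = a - y by ring, abs_of_nonneg (by linarith [hy.2])]
    rw [habs, ← hc_def] at hlipuv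
    have hay : a - y ≤ δ₀ := by linarith [hy.1, haδ']
    have hnum : |sK κ (D - y) - c| ≤ C * δ₀ :=
      le_trans hlipuv (mul_le_mul_of_nonneg_left hay hC0.le)
    have hdiv : |sK κ (D - y) / c - 1| ≤ uFd C m δ₀ := by
      rw [show sK κ (D - y) / c - 1 = (sK κ (D - y) - c) / c by field_simp, abs_div,
        abs_of_pos hc0]
      have : |sK κ (D - y) - c| / c ≤ (C * δ₀) / m :=
        div_le_div₀ (by positivity) hnum hm hcm
      simpa [uFd] using this
    obtain ⟨hd1, hd2⟩ := abs_le.1 hdiv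
    constructor <;> linarith
  -- continuity helpers
  have contS : Continuous (sK κ) := continuous_sK hκ
  have contPow : ∀ g : ℝ → ℝ, Continuous g → Continuous (fun y => g y ^ (N-1)) := by
    intro g hg
    have h1 : Continuous (fun x : ℝ => x ^ (N-1)) := by
      rw [continuous_iff_continuousAt]
      intro x
      exact Real.continuousAt_rpow_const x _ (Or.inr he.le)
    exact h1.comp hg
  have IA : IntervalIntegrable (fun y => (sK κ (D - y) / c) ^ (N-1)) volume 0 a :=
    (contPow _ ((contS.comp (continuous_const.sub continuous_id)).div_const c)).intervalIntegrable _ _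
  have IB : IntervalIntegrable (fun y => (sK κ y / sa) ^ (N-1)) volume a D :=
    (contPow _ (contS.div_const sa)).intervalIntegrable _ _
  have Ik : ∀ b₁ b₂ : ℝ, IntervalIntegrable (fun t => sK κ t ^ (N-1)) volume b₁ b₂ :=
    fun b₁ b₂ => (contPow _ contS).intervalIntegrable _ _
  -- A and its bounds
  set A := ∫ y in (0:ℝ)..a, (sK κ (D - y) / c) ^ (N-1) with hA_def
  have hAle : A ≤ a * hiFd N C m δ₀ := by
    have h1 := intervalIntegral.integral_mono_on (μ := volume) ha0.le IA
      (intervalIntegrable_const (c := hiFd N C m δ₀))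
      (fun y hy => by
        simp only [hiFd]
        exact Real.rpow_le_rpow
          (le_trans h1u.le (hratio y hy).1) (hratio y hy).2 he.le)
    rw [hA_def]
    simpa using h1
  have hAge : a * loFd N C m δ₀ ≤ A := by
    have h1 := intervalIntegral.integral_mono_on (μ := volume) ha0.le
      (intervalIntegrable_const (c := loFd N C m δ₀)) IA
      (fun y hy => by
        simp only [loFd]
        exact Real.rpow_le_rpow h1u.le (hratio y hy).1 he.le)
    rw [hA_def]
    simpa using h1
  have hApos : 0 < A := lt_of_lt_of_le (by positivity) hAge
  -- sa bounds
  have hsa_near : |sa - a| ≤ a * etaF δ₀ := by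
    rw [hsa_def]
    simpa [etaF] using sK_near hκ hδ₀1 ha0 haδ'
  have hsa_ub : sa ≤ a * (1 + etaF δ₀) := by
    obtain ⟨h1, h2⟩ := abs_le.1 hsa_near; nlinarith only [h2]
  have hsa_lb : a * (1 - etaF δ₀) ≤ sa := by
    obtain ⟨h1, h2⟩ := abs_le.1 hsa_near; nlinarith only [h1]
  have hsa0 : 0 < sa := lt_of_lt_of_le (by nlinarith only [ha0, hη2]) hsa_lb
  have hsaE0 : 0 < sa ^ (N-1) := Real.rpow_pos_of_pos hsa0 _
  have hsaE_ub : sa ^ (N-1) ≤ a ^ (N-1) * (1 + etaF δ₀) ^ (N-1) := by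
    rw [← Real.mul_rpow ha0.le (by linarith)]
    exact Real.rpow_le_rpow hsa0.le hsa_ub he.le
  have hsaE_lb : a ^ (N-1) * (1 - etaF δ₀) ^ (N-1) ≤ sa ^ (N-1) := by
    rw [← Real.mul_rpow ha0.le h1η.le]
    exact Real.rpow_le_rpow (by nlinarith only [ha0.le, hη2]) hsa_lb he.le
  -- P and Q
  set P := kD κ N D with hP_def
  set Q := kD κ N a with hQ_def
  have hQ0 : 0 ≤ Q := by
    rw [hQ_def]
    simp only [kD]
    apply intervalIntegral.integral_nonneg ha0.le
    intro t ht
    exact Real.rpow_nonneg (hsnn t ⟨ht.1, le_trans ht.2 haL⟩) _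
  have hQub : Q ≤ δ₀ * M ^ (N-1) := by
    rw [hQ_def]
    simp only [kD]
    have h1 := intervalIntegral.integral_mono_on (μ := volume) ha0.le (Ik 0 a)
      (intervalIntegrable_const (c := M ^ (N-1)))
      (fun t ht => Real.rpow_le_rpow (hsnn t ⟨ht.1, le_trans ht.2 haL⟩)
        (hsub t ⟨ht.1, le_trans ht.2 haL⟩) he.le)
    simp only [intervalIntegral.integral_const, smul_eq_mul, sub_zero] at h1
    have h2 : a * M ^ (N-1) ≤ δ₀ * M ^ (N-1) := by
      have h3 : (0:ℝ) ≤ M ^ (N-1) := Real.rpow_nonneg hM0.le _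
      nlinarith only [h3, haδ']
    linarith
  have haef : 0 ≤ᵐ[volume.restrict (Set.Ioc (0:ℝ) D)] (fun t => sK κ t ^ (N-1)) := by
    filter_upwards [ae_restrict_mem measurableSet_Ioc] with t ht
    exact Real.rpow_nonneg (hsnn t ⟨ht.1.le, ht.2.trans hDu⟩) _
  have hPlb : p₀ ≤ P := by
    rw [hP_def]
    simp only [kD]
    have h1 : (∫ t in (lam*L/2)..(lam*L), sK κ t ^ (N-1)) ≤ ∫ t in (0:ℝ)..D, sK κ t ^ (N-1) :=
      intervalIntegral.integral_mono_interval hll.le (by linarith) hDl haef (Ik 0 D)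
    have h2 := intervalIntegral.integral_mono_on (μ := volume) (by linarith : lam*L/2 ≤ lam*L)
      (intervalIntegrable_const (c := m ^ (N-1))) (Ik (lam*L/2) (lam*L))
      (fun t ht => Real.rpow_le_rpow hm.le
        (hmle t ⟨ht.1, le_trans ht.2 (by nlinarith only [hlam1, hL.le])⟩) he.le)
    simp only [intervalIntegral.integral_const, smul_eq_mul] at h2
    have h3 : (lam*L - lam*L/2) * m ^ (N-1) = p₀ := by rw [hp₀_def]; ring
    linarith
  have hP0 : 0 < P := lt_of_lt_of_le hp₀ hPlb
  have hqp : qFd N M p₀ δ₀ * p₀ = δ₀ * M ^ (N-1) := by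
    simp only [qFd]
    field_simp
  have hPQpos : 0 < P - Q := by nlinarith only [hQub, hqp, hq2, hPlb, hp₀, hq0]
  -- B
  set B := ∫ y in a..D, (sK κ y / sa) ^ (N-1) with hB_def
  have hBeq : B = (P - Q) / sa ^ (N-1) := by
    have h1 : EqOn (fun y => (sK κ y / sa) ^ (N-1))
        (fun y => sK κ y ^ (N-1) / sa ^ (N-1)) (uIcc a D) := by
      intro y hy
      rw [uIcc_of_le haD.le] at hy
      exact Real.div_rpow (hsnn y ⟨le_trans ha0.le hy.1, hy.2.trans hDu⟩) hsa0.le _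
    rw [hB_def, intervalIntegral.integral_congr h1, intervalIntegral.integral_div]
    congr 1
    rw [hP_def, hQ_def]
    simp only [kD]
    exact (intervalIntegral.integral_interval_sub_left (Ik 0 D) (Ik 0 a)).symm
  have hB0 : 0 < B := by rw [hBeq]; exact div_pos hPQpos hsaE0
  have hBub : B ≤ P / (a ^ (N-1) * (1 - etaF δ₀) ^ (N-1)) := by
    rw [hBeq]
    exact div_le_div₀ hP0.le (by linarith) (by positivity) hsaE_lb
  have hABpos : 0 < A + B := by linarith
  have haN : (0:ℝ) < a ^ N := Real.rpow_pos_of_pos ha0 _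
  have haNsplit : a ^ N = a ^ (N-1) * a := by
    have h := Real.rpow_add ha0 (N-1) 1
    rw [Real.rpow_one, show N - 1 + 1 = N from by ring] at h
    exact h
  -- value of vKND
  have hv : vKND κ N D a = (A + B)⁻¹ * A := by
    have h1 : EqOn (hKND κ N D a)
        (fun x => fKND κ N D a * (sK κ (D - x) / c) ^ (N-1)) (uIcc 0 a) := by
      intro x hx
      rw [uIcc_of_le ha0.le] at hx
      simp only [hKND, if_pos hx.2, hc_def]
    rw [vKND, intervalIntegral.integral_congr h1, intervalIntegral.integral_const_mul]
    congr 1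
  have hgoal_eq : vKND κ N D a * kD κ N D / a ^ N = A * P / ((A + B) * a ^ N) := by
    rw [hv, ← hP_def]
    field_simp
  -- upper bound
  have hup : A * P / ((A + B) * a ^ N) ≤ UFd N C m M p₀ δ₀ := by
    have step1 : A * P / ((A + B) * a ^ N) ≤ A * P / (B * a ^ N) := by
      apply div_le_div_of_nonneg_left (by positivity) (by positivity)
      nlinarith only [mul_nonneg hApos.le haN.le]
    have step2 : A * P / (B * a ^ N) = A * P * sa ^ (N-1) / ((P - Q) * a ^ N) := by
      rw [hBeq]
      rw [show (P - Q) / sa ^ (N-1) * a ^ N = (P - Q) * a ^ N / sa ^ (N-1) from by ring]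
      rw [div_div_eq_mul_div]
    have step3 : A * P * sa ^ (N-1) / ((P - Q) * a ^ N) ≤
        (a * hiFd N C m δ₀) * P * (a ^ (N-1) * (1 + etaF δ₀) ^ (N-1)) / ((P - Q) * a ^ N) := by
      gcongr
    have step4 : (a * hiFd N C m δ₀) * P * (a ^ (N-1) * (1 + etaF δ₀) ^ (N-1)) / ((P - Q) * a ^ N)
        = hiFd N C m δ₀ * (1 + etaF δ₀) ^ (N-1) * (P / (P - Q)) := by
      rw [haNsplit]
      have haE0 : (0:ℝ) < a ^ (N-1) := Real.rpow_pos_of_pos ha0 _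
      field_simp
    have step5 : P / (P - Q) ≤ 1 / (1 - qFd N M p₀ δ₀) := by
      rw [div_le_div_iff₀ hPQpos h1q]
      have hQq : Q ≤ qFd N M p₀ δ₀ * P := by
        nlinarith only [hQub, hqp, mul_le_mul_of_nonneg_left hPlb hq0]
      nlinarith only [hQq]
    have step6 : hiFd N C m δ₀ * (1 + etaF δ₀) ^ (N-1) * (P / (P - Q)) ≤
        hiFd N C m δ₀ * (1 + etaF δ₀) ^ (N-1) * (1 / (1 - qFd N M p₀ δ₀)) := by
      have hpow0 : (0:ℝ) ≤ (1 + etaF δ₀) ^ (N-1) := Real.rpow_nonneg (by linarith) _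
      have := mul_le_mul_of_nonneg_left step5 (mul_nonneg hhi0.le hpow0)
      linarith
    have hUval : UFd N C m M p₀ δ₀ = hiFd N C m δ₀ * (1 + etaF δ₀) ^ (N-1) * (1 / (1 - qFd N M p₀ δ₀)) := by
      simp only [UFd]
      rw [mul_one_div]
    rw [hUval]
    calc A * P / ((A + B) * a ^ N) ≤ A * P / (B * a ^ N) := step1
      _ = A * P * sa ^ (N-1) / ((P - Q) * a ^ N) := step2
      _ ≤ (a * hiFd N C m δ₀) * P * (a ^ (N-1) * (1 + etaF δ₀) ^ (N-1)) / ((P - Q) * a ^ N) := step3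
      _ = hiFd N C m δ₀ * (1 + etaF δ₀) ^ (N-1) * (P / (P - Q)) := step4
      _ ≤ hiFd N C m δ₀ * (1 + etaF δ₀) ^ (N-1) * (1 / (1 - qFd N M p₀ δ₀)) := step6
  -- lower bound
  have hlow : WFd N C m p₀ δ₀ ≤ A * P / ((A + B) * a ^ N) := by
    have hd1 : (0:ℝ) < (1 - etaF δ₀) ^ (N-1) := Real.rpow_pos_of_pos h1η _
    have hδN : (0:ℝ) < δ₀ ^ N := Real.rpow_pos_of_pos hδ₀ _
    have hdenW : (0:ℝ) < δ₀ ^ N * hiFd N C m δ₀ + p₀ / (1 - etaF δ₀) ^ (N-1) := by positivity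
    have hWval : WFd N C m p₀ δ₀ = loFd N C m δ₀ * p₀ / (δ₀ ^ N * hiFd N C m δ₀ + p₀ / (1 - etaF δ₀) ^ (N-1)) := by
      simp only [WFd]
    rw [hWval, div_le_div_iff₀ hdenW (mul_pos hABpos haN)]
    have haNδ : a ^ N ≤ δ₀ ^ N := Real.rpow_le_rpow ha0.le haδ' (by linarith)
    have hBa : B * a ^ N ≤ P * a / (1 - etaF δ₀) ^ (N-1) := by
      have haE0 : (0:ℝ) < a ^ (N-1) := Real.rpow_pos_of_pos ha0 _
      calc B * a ^ N ≤ (P / (a ^ (N-1) * (1 - etaF δ₀) ^ (N-1))) * a ^ N := by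
            exact mul_le_mul_of_nonneg_right hBub haN.le
        _ = P * a / (1 - etaF δ₀) ^ (N-1) := by
            rw [haNsplit]; field_simp
    have t1 : loFd N C m δ₀ * p₀ * (A * a ^ N) ≤ A * P * (δ₀ ^ N * hiFd N C m δ₀) := by
      have inner : loFd N C m δ₀ * p₀ * a ^ N ≤ P * (δ₀ ^ N * hiFd N C m δ₀) := by
        calc loFd N C m δ₀ * p₀ * a ^ N ≤ 1 * P * δ₀ ^ N := by gcongr
          _ = P * δ₀ ^ N := by ring
          _ ≤ P * (δ₀ ^ N * hiFd N C m δ₀) := by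
            rw [← mul_assoc]
            exact le_mul_of_one_le_right (by positivity) hhi1
      nlinarith only [mul_le_mul_of_nonneg_left inner hApos.le]
    have t2 : loFd N C m δ₀ * p₀ * (B * a ^ N) ≤ A * (P * p₀ / (1 - etaF δ₀) ^ (N-1)) := by
      calc loFd N C m δ₀ * p₀ * (B * a ^ N) ≤ loFd N C m δ₀ * p₀ * (P * a / (1 - etaF δ₀) ^ (N-1)) := by
            exact mul_le_mul_of_nonneg_left hBa (by positivity)
        _ = (a * loFd N C m δ₀) * (P * p₀ / (1 - etaF δ₀) ^ (N-1)) := by ring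
        _ ≤ A * (P * p₀ / (1 - etaF δ₀) ^ (N-1)) := by
            exact mul_le_mul_of_nonneg_right hAge (by positivity)
    have e1 : loFd N C m δ₀ * p₀ * ((A + B) * a ^ N)
        = loFd N C m δ₀ * p₀ * (A * a ^ N) + loFd N C m δ₀ * p₀ * (B * a ^ N) := by ring
    have e2 : A * P * (δ₀ ^ N * hiFd N C m δ₀ + p₀ / (1 - etaF δ₀) ^ (N-1))
        = A * P * (δ₀ ^ N * hiFd N C m δ₀) + A * (P * p₀ / (1 - etaF δ₀) ^ (N-1)) := by ring
    rw [e1, e2]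
    exact add_le_add t1 t2
  -- conclude
  rw [hgoal_eq, abs_le]
  constructor
  · linarith [le_trans hWε hlow]
  · linarith [le_trans hup hUε]
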